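/- arXiv:nlin/0405029 — 2 statements merged into one kernel-verified Lean document; each statement's English description precedes it below -/
import Mathlib

section
/- Let c ≥ 0, β < 0, and let J : ℝ → ℝ be continuous, strictly positive, and 2π-periodic. Set g₀ = Ω(c, β)/max_{x∈ℝ} J(x), where Ω(c, β) = min_{λ>0} f_{c,β}(λ). If 0 < g < g₀, then for every λ > 0, every differentiable φ : ℝ → ℝ satisfying φ'(z) = λ h(φ(z)) + λ g R_λ(z) w(φ(z)) for all z ∈ ℝ and φ(0) = π satisfies φ(π) − φ(−π) < 2π; in particular no rotating wave exists. -/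
/-- The Heaviside step function. -/
noncomputable def Heav (z : ℝ) : ℝ := if z < 0 then 0 else 1

/-- The synaptic profile `r_λ(z)`, given by formula (3.10); on `(-π, π) \ {0}` (the only
values relevant to the integrals below) it equals
`(1/2) e^{-(λz + (c/2)H(z))} [H(z) + (e^{2πλ + c/2} - 1)⁻¹]`. -/
noncomputable def rTheta (c lam z : ℝ) : ℝ :=
  (1 / 2) * Real.exp (-(lam * z + (c / 2) * Heav z)) *
    (Heav z + (Real.exp (2 * Real.pi * lam + c / 2) - 1)⁻¹)

/-- `R_λ(z) = ∫_{-π}^{π} J(z - y) r_λ(y) dy` (formula (3.13)). -/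
noncomputable def RTheta (J : ℝ → ℝ) (c lam z : ℝ) : ℝ :=
  ∫ y in (-Real.pi)..Real.pi, J (z - y) * rTheta c lam y

/-- `h(θ) = 1 - cos θ + β(1 + cos θ)`. -/
noncomputable def hTheta (β θ : ℝ) : ℝ := 1 - Real.cos θ + β * (1 + Real.cos θ)

/-- `w(θ) = 1 + cos θ`. -/
noncomputable def wTheta (θ : ℝ) : ℝ := 1 + Real.cos θ

/-- `ρ_c(λ) = (e^{2πλ} - 1)/(e^{2πλ + c/2} - 1)`. -/
noncomputable def rhoC (c lam : ℝ) : ℝ :=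
  (Real.exp (2 * Real.pi * lam) - 1) / (Real.exp (2 * Real.pi * lam + c / 2) - 1)

/-- `f_{c,β}(λ) = (1 - 4βλ²)/(2λ ρ_c(λ))`. -/
noncomputable def fCB (c β lam : ℝ) : ℝ := (1 - 4 * β * lam ^ 2) / (2 * lam * rhoC c lam)

open Real Set Filter MeasureTheory intervalIntegral

lemma comp_core (lam b' b : ℝ) (hlam : 0 < lam) (hb'b : b' < b) (hb : 0 < b)
    (hb1 : 4 * lam ^ 2 * b < 1) :
    ∃ C, C < 2 * Real.pi ∧ ∀ ψ : ℝ → ℝ, Differentiable ℝ ψ → ψ 0 = Real.pi →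
      (∀ z, deriv ψ z ≤ lam * (1 - Real.cos (ψ z)) + lam * b' * (1 + Real.cos (ψ z))) →
      ψ Real.pi < C := by
  have hπ := Real.pi_pos
  set sb := Real.sqrt b with hsbdef
  have hsb : 0 < sb := Real.sqrt_pos.mpr hb
  have hsb2 : sb ^ 2 = b := Real.sq_sqrt hb.le
  set μ := 2 * lam * sb with hμdef
  have hμ : 0 < μ := by positivity
  have hμ1 : μ < 1 := by
    nlinarith [sq_nonneg (μ - 1), sq_nonneg μ]
  set σ := sb⁻¹ with hσdef
  have hσ : 0 < σ := by positivity
  set T := Real.pi / μ with hTdef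
  have hπT : Real.pi < T := by
    rw [hTdef, lt_div_iff₀ hμ]; nlinarith
  set s := (T - Real.pi) / 2 with hsdef
  have hs : 0 < s := by simp only [hsdef]; linarith
  set P := Real.pi + s with hPdef
  have hPT : P < T := by simp only [hPdef, hsdef]; linarith
  set Phi : ℝ → ℝ := fun z => Real.pi + 2 * Real.arctan (σ * Real.tan (μ * z / 2)) with hPhidef
  have hcos2 : ∀ w : ℝ, Real.cos (2 * Real.arctan w) = (1 - w ^ 2) / (1 + w ^ 2) := by
    intro w
    have h1 : (0:ℝ) < 1 + w ^ 2 := by positivity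
    rw [Real.cos_two_mul, Real.cos_sq_arctan]
    field_simp
    ring
  have hcosPhi : ∀ z : ℝ, Real.cos (Phi z) =
      ((σ * Real.tan (μ * z / 2)) ^ 2 - 1) / (1 + (σ * Real.tan (μ * z / 2)) ^ 2) := by
    intro z
    have h0 : Real.cos (Phi z) = -Real.cos (2 * Real.arctan (σ * Real.tan (μ * z / 2))) := by
      simp [hPhidef, Real.cos_add]
    rw [h0, hcos2, ← neg_div, neg_sub]
  have hu : ∀ z ∈ Ioo (0:ℝ) T, 0 < μ * z / 2 ∧ μ * z / 2 < Real.pi / 2 := by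
    intro z hz
    have hz2 : z < Real.pi / μ := by rw [hTdef] at hz; exact hz.2
    have h3 : z * μ < Real.pi := (lt_div_iff₀ hμ).mp hz2
    have hz1 := hz.1
    constructor
    · positivity
    · nlinarith
  have hcosu : ∀ z ∈ Ioo (0:ℝ) T, 0 < Real.cos (μ * z / 2) := by
    intro z hz
    obtain ⟨h1, h2⟩ := hu z hz
    exact Real.cos_pos_of_mem_Ioo ⟨by linarith [Real.pi_div_two_pos], h2⟩
  have htanu : ∀ z ∈ Ioo (0:ℝ) T, 0 < Real.tan (μ * z / 2) := by
    intro z hz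
    obtain ⟨h1, h2⟩ := hu z hz
    exact Real.tan_pos_of_pos_of_lt_pi_div_two h1 h2
  have hPhi_gt : ∀ z ∈ Ioo (0:ℝ) T, Real.pi < Phi z := by
    intro z hz
    have ht := htanu z hz
    have : 0 < Real.arctan (σ * Real.tan (μ * z / 2)) := by
      have h0 : 0 < σ * Real.tan (μ * z / 2) := by positivity
      simpa using Real.arctan_strictMono h0
    simp only [hPhidef]; linarith
  have hPhi_lt : ∀ z : ℝ, Phi z < 2 * Real.pi := by
    intro z
    have := Real.arctan_lt_pi_div_two (σ * Real.tan (μ * z / 2))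
    simp only [hPhidef]; linarith
  have hwPhi : ∀ z ∈ Ioo (0:ℝ) T, 0 < 1 + Real.cos (Phi z) := by
    intro z hz
    have ht := htanu z hz
    have hy : 0 < σ * Real.tan (μ * z / 2) := by positivity
    have h1 : (0:ℝ) < 1 + (σ * Real.tan (μ * z / 2)) ^ 2 := by positivity
    have h2 : 1 + Real.cos (Phi z) = 2 * (σ * Real.tan (μ * z / 2)) ^ 2 /
        (1 + (σ * Real.tan (μ * z / 2)) ^ 2) := by
      rw [hcosPhi z]
      field_simp
      ring
    rw [h2]; positivity
  have hPhiD : ∀ z ∈ Ioo (0:ℝ) T, HasDerivAt Phi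
      (lam * (1 - Real.cos (Phi z)) + lam * b * (1 + Real.cos (Phi z))) z := by
    intro z hz
    have hcz := hcosu z hz
    have h1 : HasDerivAt (fun w : ℝ => μ * w / 2) (μ / 2) z := by
      simpa using ((hasDerivAt_id z).const_mul μ).div_const 2
    have h2 : HasDerivAt Real.tan (1 / Real.cos (μ * z / 2) ^ 2) (μ * z / 2) :=
      Real.hasDerivAt_tan hcz.ne'
    have h3 : HasDerivAt (fun w : ℝ => Real.tan (μ * w / 2))
        (1 / Real.cos (μ * z / 2) ^ 2 * (μ / 2)) z := by have h := h2.comp z h1; exact h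
    have h4 : HasDerivAt (fun w : ℝ => σ * Real.tan (μ * w / 2))
        (σ * (1 / Real.cos (μ * z / 2) ^ 2 * (μ / 2))) z := h3.const_mul σ
    have h5 : HasDerivAt Real.arctan (1 / (1 + (σ * Real.tan (μ * z / 2)) ^ 2))
        (σ * Real.tan (μ * z / 2)) := Real.hasDerivAt_arctan _
    have h6 : HasDerivAt Phi
        (2 * (1 / (1 + (σ * Real.tan (μ * z / 2)) ^ 2) *
          (σ * (1 / Real.cos (μ * z / 2) ^ 2 * (μ / 2))))) z := by
      exact ((h5.comp z h4).const_mul 2).const_add Real.pi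
    convert h6 using 1
    set t := Real.tan (μ * z / 2) with htdef
    have h1t : 1 / Real.cos (μ * z / 2) ^ 2 = 1 + t ^ 2 := by
      rw [one_div, ← Real.inv_one_add_tan_sq hcz.ne', inv_inv]
    rw [h1t, hcosPhi z, ← htdef]
    have hy1 : (0:ℝ) < 1 + (σ * t) ^ 2 := by positivity
    have hsbne : sb ≠ 0 := hsb.ne'
    rw [hσdef, hμdef]
    field_simp
    rw [← hsb2]; ring
  refine ⟨Phi P, hPhi_lt P, ?_⟩
  intro ψ hdiff hψ0 hineq
  by_contra hcon
  push_neg at hcon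
  have hψc : Continuous ψ := hdiff.continuous
  -- continuity of Phi on [s, P]
  have hPhiC : ContinuousOn Phi (Icc s P) := by
    intro w hw
    have hw' : w ∈ Ioo (0:ℝ) T := ⟨lt_of_lt_of_le hs hw.1, lt_of_le_of_lt hw.2 hPT⟩
    have hcw := hcosu w hw'
    have htan : ContinuousAt (fun w : ℝ => Real.tan (μ * w / 2)) w := by
      have hc : ContinuousAt Real.tan (μ * w / 2) := Real.continuousAt_tan.mpr hcw.ne'
      have hinner : ContinuousAt (fun x : ℝ => μ * x / 2) w :=
        ((continuous_const.mul continuous_id).div_const 2).continuousAt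
      exact ContinuousAt.comp (f := fun x : ℝ => μ * x / 2) hc hinner
    have h2 : ContinuousAt (fun w : ℝ => σ * Real.tan (μ * w / 2)) w := continuousAt_const.mul htan
    have h3 : ContinuousAt (fun w : ℝ => Real.arctan (σ * Real.tan (μ * w / 2))) w :=
      Real.continuous_arctan.continuousAt.comp h2
    exact (continuousAt_const.add (continuousAt_const.mul h3)).continuousWithinAt
  -- clamped difference function
  set cl : ℝ → ℝ := fun z => min (max z 0) Real.pi with hcldef
  have hclmem : ∀ z, cl z + s ∈ Icc s P := by
    intro z
    constructor
    · have : (0:ℝ) ≤ cl z := le_min (le_max_right z 0) hπ.le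
      linarith
    · have : cl z ≤ Real.pi := min_le_right _ _
      simp only [hPdef]; linarith
  have hclcont : Continuous (fun z => cl z + s) :=
    ((continuous_id.max continuous_const).min continuous_const).add continuous_const
  set f : ℝ → ℝ := fun z => Phi (cl z + s) - ψ z with hfdef
  have hfc : Continuous f := (hPhiC.comp_continuous hclcont hclmem).sub hψc
  have hfz : ∀ z ∈ Icc (0:ℝ) Real.pi, f z = Phi (z + s) - ψ z := by
    intro z hz
    have : cl z = z := by
      simp only [hcldef]
      rw [max_eq_left hz.1, min_eq_left hz.2]
    simp only [hfdef, this]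
  set S : Set ℝ := Icc 0 Real.pi ∩ f ⁻¹' Iic 0 with hSdef
  have hSclosed : IsClosed S := isClosed_Icc.inter (isClosed_Iic.preimage hfc)
  have hSne : S.Nonempty := by
    refine ⟨Real.pi, ⟨hπ.le, le_refl _⟩, ?_⟩
    show f Real.pi ≤ 0
    rw [hfz Real.pi ⟨hπ.le, le_refl _⟩, ← hPdef]
    linarith
  have hSbdd : BddBelow S := ⟨0, fun x hx => hx.1.1⟩
  set z0 := sInf S with hz0def
  have hz0S : z0 ∈ S := hSclosed.csInf_mem hSne hSbdd
  have hz0Icc : z0 ∈ Icc (0:ℝ) Real.pi := hz0S.1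
  have hz0pos : 0 < z0 := by
    rcases lt_or_eq_of_le hz0Icc.1 with h | h
    · exact h
    · exfalso
      have h0S : (0:ℝ) ∈ S := h ▸ hz0S
      have : f 0 ≤ 0 := h0S.2
      rw [hfz 0 ⟨le_refl _, hπ.le⟩] at this
      have hsT : s ∈ Ioo (0:ℝ) T := ⟨hs, by simp only [hPdef] at hPT; linarith⟩
      have := hPhi_gt s hsT
      rw [zero_add] at *
      linarith [hψ0 ▸ this]
  have hbefore : ∀ z ∈ Ico (0:ℝ) z0, 0 < f z := by
    intro z hz
    have hznot : z ∉ S := notMem_of_lt_csInf hz.2 hSbdd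
    have hzIcc : z ∈ Icc (0:ℝ) Real.pi := ⟨hz.1, le_trans hz.2.le hz0Icc.2⟩
    by_contra hcon2
    push_neg at hcon2
    exact hznot ⟨hzIcc, hcon2⟩
  -- f z0 = 0
  have hfz0_le : f z0 ≤ 0 := hz0S.2
  have hfz0_ge : 0 ≤ f z0 := by
    have htend : Tendsto f (nhdsWithin z0 (Iio z0)) (nhds (f z0)) :=
      (hfc.tendsto z0).mono_left nhdsWithin_le_nhds
    have hev : ∀ᶠ x in nhdsWithin z0 (Iio z0), 0 ≤ f x := by
      filter_upwards [Ioo_mem_nhdsLT_of_mem (⟨hz0pos, le_refl z0⟩ : z0 ∈ Ioc 0 z0)] with x hx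
      exact (hbefore x ⟨hx.1.le, hx.2⟩).le
    exact ge_of_tendsto htend hev
  have hfz0 : f z0 = 0 := le_antisymm hfz0_le hfz0_ge
  have hψz0 : ψ z0 = Phi (z0 + s) := by
    have := hfz z0 hz0Icc
    rw [this] at hfz0
    linarith
  -- derivative of q at z0
  have hz0sT : z0 + s ∈ Ioo (0:ℝ) T := by
    constructor
    · linarith [hz0Icc.1]
    · have : z0 + s ≤ P := by simp only [hPdef]; linarith [hz0Icc.2]
      linarith [hPT]
  have hPhiDz : HasDerivAt (fun z => Phi (z + s))
      (lam * (1 - Real.cos (Phi (z0 + s))) + lam * b * (1 + Real.cos (Phi (z0 + s)))) z0 := by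
    have hin : HasDerivAt (fun z : ℝ => z + s) 1 z0 := (hasDerivAt_id z0).add_const s
    have := (hPhiD (z0 + s) hz0sT).comp z0 hin
    simpa [Function.comp_def] using this
  set q : ℝ → ℝ := fun z => ψ z - Phi (z + s) with hqdef
  have hqD : HasDerivAt q (deriv ψ z0 -
      (lam * (1 - Real.cos (Phi (z0 + s))) + lam * b * (1 + Real.cos (Phi (z0 + s))))) z0 :=
    ((hdiff z0).hasDerivAt).sub hPhiDz
  -- q ≥ 0 slope limit: deriv at z0 is ≥ 0
  have hq_neg : ∀ z ∈ Ioo (0:ℝ) z0, q z < 0 := by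
    intro z hz
    have h1 := hbefore z ⟨hz.1.le, hz.2⟩
    have hzIcc : z ∈ Icc (0:ℝ) Real.pi := ⟨hz.1.le, le_trans hz.2.le hz0Icc.2⟩
    rw [hfz z hzIcc] at h1
    simp only [hqdef]
    linarith
  have hq_z0 : q z0 = 0 := by simp only [hqdef]; rw [hψz0]; ring
  have hslope : 0 ≤ deriv ψ z0 -
      (lam * (1 - Real.cos (Phi (z0 + s))) + lam * b * (1 + Real.cos (Phi (z0 + s)))) := by
    have htend := hasDerivAt_iff_tendsto_slope.mp hqD
    have htend2 : Tendsto (slope q z0) (nhdsWithin z0 (Iio z0)) (nhds (deriv ψ z0 -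
        (lam * (1 - Real.cos (Phi (z0 + s))) + lam * b * (1 + Real.cos (Phi (z0 + s)))))) :=
      htend.mono_left (nhdsWithin_mono z0 (fun x hx => ne_of_lt hx))
    refine ge_of_tendsto htend2 ?_
    filter_upwards [Ioo_mem_nhdsLT_of_mem (⟨hz0pos, le_refl z0⟩ : z0 ∈ Ioc 0 z0)] with x hx
    rw [slope_def_field, hq_z0, sub_zero]
    have h1 := hq_neg x hx
    have h2 : x - z0 < 0 := by linarith [hx.2]
    have := div_pos (neg_pos.mpr h1) (neg_pos.mpr h2)
    rw [neg_div_neg_eq] at this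
    exact this.le
  -- contradiction
  have hθ := hwPhi (z0 + s) hz0sT
  have hle := hineq z0
  rw [hψz0] at hle
  nlinarith [mul_pos (mul_pos hlam (sub_pos.mpr hb'b)) hθ]

section integrals

variable {c lam : ℝ}

lemma expA_pos (hc : 0 ≤ c) (hlam : 0 < lam) :
    0 < (Real.exp (2 * Real.pi * lam + c / 2) - 1)⁻¹ := by
  have hπ := Real.pi_pos
  have h1 : 1 < Real.exp (2 * Real.pi * lam + c / 2) := by
    rw [Real.one_lt_exp_iff]
    positivity
  simp only [inv_pos]
  linarith

lemma rTheta_nonneg (hc : 0 ≤ c) (hlam : 0 < lam) (z : ℝ) : 0 ≤ rTheta c lam z := by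
  have hA := expA_pos hc hlam
  have hH : 0 ≤ Heav z := by unfold Heav; split <;> norm_num
  unfold rTheta
  have := Real.exp_pos (-(lam * z + c / 2 * Heav z))
  positivity

lemma rTheta_eq_neg (hz : z < 0) : rTheta c lam z =
    (1 / 2) * Real.exp (-(lam * z)) * (Real.exp (2 * Real.pi * lam + c / 2) - 1)⁻¹ := by
  unfold rTheta Heav
  rw [if_pos hz]
  ring_nf

lemma rTheta_eq_nonneg (hz : 0 ≤ z) : rTheta c lam z =
    (1 / 2) * Real.exp (-(lam * z + c / 2)) *
      (1 + (Real.exp (2 * Real.pi * lam + c / 2) - 1)⁻¹) := by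
  unfold rTheta Heav
  rw [if_neg (not_lt.mpr hz)]
  ring_nf

/-- ae equality on the negative piece -/
lemma rTheta_ae_neg (u : ℝ → ℝ) :
    ∀ᵐ (x : ℝ) ∂volume, x ∈ Set.Ioc (-Real.pi) 0 →
      u x * rTheta c lam x =
      u x * ((1 / 2) * Real.exp (-(lam * x)) * (Real.exp (2 * Real.pi * lam + c / 2) - 1)⁻¹) := by
  rw [MeasureTheory.ae_iff]
  refine measure_mono_null ?_ (measure_singleton (0:ℝ))
  intro x hx
  simp only [Set.mem_setOf_eq, not_forall] at hx
  simp only [Set.mem_singleton_iff]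
  by_contra hx0
  obtain ⟨hmem, hne⟩ := hx
  have hxlt : x < 0 := lt_of_le_of_ne hmem.2 hx0
  exact hne (by rw [rTheta_eq_neg hxlt])

lemma intInt_mul_neg (u : ℝ → ℝ) (hu : Continuous u) (hc : 0 ≤ c) (hlam : 0 < lam) :
    IntervalIntegrable (fun y => u y * rTheta c lam y) volume (-Real.pi) 0 := by
  have hπ := Real.pi_pos
  rw [intervalIntegrable_iff, uIoc_of_le (by linarith : -Real.pi ≤ (0:ℝ))]
  have hg : IntegrableOn (fun y => u y * ((1 / 2) * Real.exp (-(lam * y)) *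
      (Real.exp (2 * Real.pi * lam + c / 2) - 1)⁻¹)) (Set.Ioc (-Real.pi) 0) volume := by
    apply Continuous.integrableOn_Ioc
    continuity
  apply hg.congr
  rw [Filter.EventuallyEq, MeasureTheory.ae_restrict_iff' measurableSet_Ioc]
  filter_upwards [rTheta_ae_neg u] with x hx hmem
  exact (hx hmem).symm

lemma intInt_mul_pos (u : ℝ → ℝ) (hu : Continuous u) (hc : 0 ≤ c) (hlam : 0 < lam) :
    IntervalIntegrable (fun y => u y * rTheta c lam y) volume 0 Real.pi := by
  have hπ := Real.pi_pos
  rw [intervalIntegrable_iff, uIoc_of_le hπ.le]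
  have hg : IntegrableOn (fun y => u y * ((1 / 2) * Real.exp (-(lam * y + c / 2)) *
      (1 + (Real.exp (2 * Real.pi * lam + c / 2) - 1)⁻¹))) (Set.Ioc 0 Real.pi) volume := by
    apply Continuous.integrableOn_Ioc
    continuity
  apply hg.congr
  rw [Filter.EventuallyEq, MeasureTheory.ae_restrict_iff' measurableSet_Ioc]
  apply Filter.Eventually.of_forall
  intro x hmem
  rw [rTheta_eq_nonneg hmem.1.le]

lemma intInt_mul (u : ℝ → ℝ) (hu : Continuous u) (hc : 0 ≤ c) (hlam : 0 < lam) :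
    IntervalIntegrable (fun y => u y * rTheta c lam y) volume (-Real.pi) Real.pi :=
  (intInt_mul_neg u hu hc hlam).trans (intInt_mul_pos u hu hc hlam)

lemma rTheta_int_neg (hc : 0 ≤ c) (hlam : 0 < lam) :
    ∫ y in (-Real.pi)..0, rTheta c lam y =
      (Real.exp (2 * Real.pi * lam + c / 2) - 1)⁻¹ / (2 * lam) * (Real.exp (lam * Real.pi) - 1) := by
  set A := (Real.exp (2 * Real.pi * lam + c / 2) - 1)⁻¹ with hAdef
  have hπ := Real.pi_pos
  have h1 : ∫ y in (-Real.pi)..0, rTheta c lam y =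
      ∫ y in (-Real.pi)..0, (1 / 2) * Real.exp (-(lam * y)) * A := by
    apply intervalIntegral.integral_congr_ae
    rw [uIoc_of_le (by linarith : -Real.pi ≤ (0:ℝ))]
    filter_upwards [rTheta_ae_neg (c := c) (lam := lam) (fun _ => 1)] with x hx hmem
    have := hx hmem
    simpa using this
  rw [h1]
  have hD : ∀ y ∈ Set.uIcc (-Real.pi) (0:ℝ), HasDerivAt
      (fun y => -(1 / (2 * lam)) * Real.exp (-(lam * y)) * A)
      ((1 / 2) * Real.exp (-(lam * y)) * A) y := by
    intro y _
    have hin : HasDerivAt (fun y : ℝ => -(lam * y)) (-lam) y := by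
      simpa only [id_eq, mul_one, Pi.neg_def] using ((hasDerivAt_id y).const_mul lam).neg
    have hexp : HasDerivAt (fun y : ℝ => Real.exp (-(lam * y)))
        (Real.exp (-(lam * y)) * (-lam)) y := (Real.hasDerivAt_exp _).comp y hin
    have := (hexp.const_mul (-(1 / (2 * lam)))).mul_const A
    refine this.congr_deriv ?_
    field_simp
  rw [intervalIntegral.integral_eq_sub_of_hasDerivAt hD (by
    apply Continuous.intervalIntegrable; continuity)]
  simp only [mul_zero, neg_zero, Real.exp_zero, mul_neg, neg_neg]
  field_simp
  ring

lemma rTheta_int_pos (hc : 0 ≤ c) (hlam : 0 < lam) :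
    ∫ y in (0:ℝ)..Real.pi, rTheta c lam y =
      (1 + (Real.exp (2 * Real.pi * lam + c / 2) - 1)⁻¹) / (2 * lam) *
        (Real.exp (-(c / 2)) - Real.exp (-(lam * Real.pi + c / 2))) := by
  set A := (Real.exp (2 * Real.pi * lam + c / 2) - 1)⁻¹ with hAdef
  have hπ := Real.pi_pos
  have h1 : ∫ y in (0:ℝ)..Real.pi, rTheta c lam y =
      ∫ y in (0:ℝ)..Real.pi, (1 / 2) * Real.exp (-(lam * y + c / 2)) * (1 + A) := by
    apply intervalIntegral.integral_congr
    intro y hy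
    rw [Set.uIcc_of_le hπ.le] at hy
    exact rTheta_eq_nonneg hy.1
  rw [h1]
  have hD : ∀ y ∈ Set.uIcc (0:ℝ) Real.pi, HasDerivAt
      (fun y => -(1 / (2 * lam)) * Real.exp (-(lam * y + c / 2)) * (1 + A))
      ((1 / 2) * Real.exp (-(lam * y + c / 2)) * (1 + A)) y := by
    intro y _
    have hin : HasDerivAt (fun y : ℝ => -(lam * y + c / 2)) (-lam) y := by
      simpa only [id_eq, mul_one, Pi.neg_def] using (((hasDerivAt_id y).const_mul lam).add_const (c / 2)).neg
    have hexp : HasDerivAt (fun y : ℝ => Real.exp (-(lam * y + c / 2)))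
        (Real.exp (-(lam * y + c / 2)) * (-lam)) y := (Real.hasDerivAt_exp _).comp y hin
    have := (hexp.const_mul (-(1 / (2 * lam)))).mul_const (1 + A)
    refine this.congr_deriv ?_
    field_simp
  rw [intervalIntegral.integral_eq_sub_of_hasDerivAt hD (by
    apply Continuous.intervalIntegrable; continuity)]
  simp only [mul_zero, zero_add]
  field_simp
  ring

lemma rTheta_int (hc : 0 ≤ c) (hlam : 0 < lam) :
    ∫ y in (-Real.pi)..Real.pi, rTheta c lam y = rhoC c lam / (2 * lam) := by
  have hπ := Real.pi_pos
  have hadd := intervalIntegral.integral_add_adjacent_intervals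
    (intInt_mul_neg (c := c) (lam := lam) (fun _ => 1) continuous_const hc hlam)
    (intInt_mul_pos (c := c) (lam := lam) (fun _ => 1) continuous_const hc hlam)
  simp only [one_mul] at hadd
  rw [← hadd, rTheta_int_neg hc hlam, rTheta_int_pos hc hlam]
  unfold rhoC
  set E := Real.exp (lam * Real.pi) with hEdef
  have hE : 1 < E := Real.one_lt_exp_iff.mpr (by positivity)
  have hE2 : Real.exp (2 * Real.pi * lam) = E ^ 2 := by
    rw [hEdef, ← Real.exp_nat_mul]
    congr 1
    push_cast
    ring
  set D := Real.exp (c / 2) with hDdef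
  have hD1 : 1 ≤ D := by
    rw [hDdef]
    calc (1:ℝ) = Real.exp 0 := by simp
    _ ≤ _ := Real.exp_le_exp.mpr (by positivity)
  have hED : Real.exp (2 * Real.pi * lam + c / 2) = E ^ 2 * D := by
    rw [Real.exp_add, hE2]
  have hcm : Real.exp (-(c / 2)) = D⁻¹ := by rw [← Real.exp_neg]
  have hlm : Real.exp (-(lam * Real.pi + c / 2)) = E⁻¹ * D⁻¹ := by
    rw [← Real.exp_neg, ← Real.exp_neg, ← Real.exp_add]
    congr 1
    ring
  rw [hED, hcm, hlm, hE2]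
  have hEDpos : 0 < E ^ 2 * D - 1 := by nlinarith
  have hE0 : (0:ℝ) < E := by linarith
  have hD0 : (0:ℝ) < D := by linarith
  field_simp
  ring

end integrals

/-- Theorem 5.6 (theorem `noex`): in the excitable case `β < 0`, if
`0 < g < g₀ = Ω(c,β)/max J` where `Ω(c,β) = min_{λ>0} f_{c,β}(λ)`, then for every
`λ > 0` the solution of (3.18)-(3.19) satisfies `φ_λ(π) - φ_λ(-π) < 2π`;
in particular no rotating wave exists. -/
theorem rotating_waves_stmt_16 (c β g : ℝ) (hc : 0 ≤ c) (hβ : β < 0)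
    (J : ℝ → ℝ) (hJcont : Continuous J) (hJpos : ∀ x : ℝ, 0 < J x)
    (hJper : ∀ x : ℝ, J (x + 2 * Real.pi) = J x)
    (Ω : ℝ) (hΩ : IsLeast (fCB c β '' Set.Ioi 0) Ω)
    (hg : 0 < g) (hg0 : g < Ω / sSup (Set.range J)) :
    ∀ lam : ℝ, 0 < lam → ∀ φ : ℝ → ℝ, Differentiable ℝ φ →
      (∀ z : ℝ, deriv φ z
        = lam * hTheta β (φ z) + lam * g * RTheta J c lam z * wTheta (φ z)) →
      φ 0 = Real.pi →
      φ Real.pi - φ (-Real.pi) < 2 * Real.pi := by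
  intro lam hlam φ hφdiff hφode hφ0
  have hπ := Real.pi_pos
  -- maximum of J
  have hper : Function.Periodic J (2 * Real.pi) := hJper
  have hrange : Set.range J = J '' Set.Icc 0 (0 + 2 * Real.pi) :=
    (hper.image_Icc (by positivity) 0).symm
  have hbdd : BddAbove (Set.range J) := by
    rw [hrange]; exact (isCompact_Icc.image hJcont).bddAbove
  set M := sSup (Set.range J) with hMdef
  have hJle : ∀ x, J x ≤ M := fun x => le_csSup hbdd (Set.mem_range_self x)
  have hMpos : 0 < M := lt_of_lt_of_le (hJpos 0) (hJle 0)
  have hΩpos : 0 < Ω := by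
    by_contra h
    push_neg at h
    have : Ω / M ≤ 0 := div_nonpos_of_nonpos_of_nonneg h hMpos.le
    linarith
  have hgM : g * M < Ω := (lt_div_iff₀ hMpos).mp hg0
  have hρ : 0 < rhoC c lam := by
    unfold rhoC
    have h1 : 1 < Real.exp (2 * Real.pi * lam) := Real.one_lt_exp_iff.mpr (by positivity)
    have h2 : 1 < Real.exp (2 * Real.pi * lam + c / 2) := Real.one_lt_exp_iff.mpr (by positivity)
    apply div_pos <;> linarith
  have hΩle : Ω ≤ fCB c β lam := hΩ.2 ⟨lam, Set.mem_Ioi.mpr hlam, rfl⟩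
  set K0 := g * M * rhoC c lam / (2 * lam) with hK0def
  have hK0lt : β + K0 < (4 * lam ^ 2)⁻¹ := by
    have h2 : g * M < (1 - 4 * β * lam ^ 2) / (2 * lam * rhoC c lam) := by
      have := hgM.trans_le hΩle
      unfold fCB at this
      exact this
    have h3 : (0:ℝ) < 2 * lam * rhoC c lam := by positivity
    rw [lt_div_iff₀ h3] at h2
    have h4 : (0:ℝ) < 4 * lam ^ 2 := by positivity
    rw [show (4 * lam ^ 2)⁻¹ = 1 / (4 * lam ^ 2) by rw [one_div], lt_div_iff₀ h4]
    have hK0e : K0 * (4 * lam ^ 2) = g * M * (2 * lam * rhoC c lam) := by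
      rw [hK0def]; field_simp; ring
    nlinarith [h2, hK0e]
  set b' := max (β + K0) 0 with hb'def
  have hb'inv : b' < (4 * lam ^ 2)⁻¹ := max_lt hK0lt (by positivity)
  set b := (b' + (4 * lam ^ 2)⁻¹) / 2 with hbdef
  have hb'b : b' < b := by rw [hbdef]; linarith
  have hbpos : 0 < b := by
    have h0 : (0:ℝ) ≤ b' := le_max_right _ _
    have : (0:ℝ) < (4 * lam ^ 2)⁻¹ := by positivity
    rw [hbdef]; linarith
  have hb1 : 4 * lam ^ 2 * b < 1 := by
    have hbinv : b < (4 * lam ^ 2)⁻¹ := by rw [hbdef]; linarith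
    have h4 : (0:ℝ) < 4 * lam ^ 2 := by positivity
    calc 4 * lam ^ 2 * b < 4 * lam ^ 2 * (4 * lam ^ 2)⁻¹ := by
          exact (mul_lt_mul_iff_right₀ h4).mpr hbinv
    _ = 1 := mul_inv_cancel₀ h4.ne'
  obtain ⟨C, hC2π, hCmain⟩ := comp_core lam b' b hlam hb'b hbpos hb1
  -- bound on RTheta
  have hRbound : ∀ z, RTheta J c lam z ≤ M * (rhoC c lam / (2 * lam)) := by
    intro z
    unfold RTheta
    have hcont : Continuous (fun y => J (z - y)) :=
      hJcont.comp (continuous_const.sub continuous_id)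
    have h1 : (∫ y in (-Real.pi)..Real.pi, J (z - y) * rTheta c lam y)
        ≤ ∫ y in (-Real.pi)..Real.pi, M * rTheta c lam y := by
      apply intervalIntegral.integral_mono_on (by linarith)
        (intInt_mul (fun y => J (z - y)) hcont hc hlam)
        (intInt_mul (fun _ => M) continuous_const hc hlam)
      intro x _
      exact mul_le_mul_of_nonneg_right (hJle _) (rTheta_nonneg hc hlam x)
    rwa [intervalIntegral.integral_const_mul, rTheta_int hc hlam] at h1
  -- the differential inequality for φ
  have hBound1 : ∀ z, deriv φ z ≤ lam * (1 - Real.cos (φ z)) + lam * b' * (1 + Real.cos (φ z)) := by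
    intro z
    rw [hφode z]
    unfold hTheta wTheta
    have hw : 0 ≤ 1 + Real.cos (φ z) := by linarith [Real.neg_one_le_cos (φ z)]
    have hR : g * RTheta J c lam z ≤ K0 := by
      have h1 := mul_le_mul_of_nonneg_left (hRbound z) hg.le
      rw [hK0def]
      calc g * RTheta J c lam z ≤ g * (M * (rhoC c lam / (2 * lam))) := h1
      _ = g * M * rhoC c lam / (2 * lam) := by ring
    have hb'R : g * RTheta J c lam z ≤ b' - β := by
      have : β + K0 ≤ b' := le_max_left _ _
      linarith
    nlinarith [mul_le_mul_of_nonneg_left (mul_le_mul_of_nonneg_right hb'R hw) hlam.le]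
  have hφπ : φ Real.pi < C := hCmain φ hφdiff hφ0 hBound1
  -- the reflected solution
  set φt : ℝ → ℝ := fun z => 2 * Real.pi - φ (-z) with hφtdef
  have hφtdiff : Differentiable ℝ φt :=
    (differentiable_const _).sub (hφdiff.comp differentiable_neg)
  have hφt0 : φt 0 = Real.pi := by
    simp only [hφtdef, neg_zero, hφ0]; ring
  have hderivt : ∀ z, deriv φt z = deriv φ (-z) := by
    intro z
    have h1 : HasDerivAt (fun z : ℝ => φ (-z)) (deriv φ (-z) * (-1)) z :=
      ((hφdiff (-z)).hasDerivAt).comp z (hasDerivAt_neg z)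
    have h2 : HasDerivAt φt (-(deriv φ (-z) * (-1))) z := h1.const_sub (2 * Real.pi)
    simpa using h2.deriv
  have hcos_t : ∀ z, Real.cos (φt z) = Real.cos (φ (-z)) := by
    intro z
    simp only [hφtdef]
    rw [Real.cos_sub]
    simp
  have hBound2 : ∀ z, deriv φt z ≤
      lam * (1 - Real.cos (φt z)) + lam * b' * (1 + Real.cos (φt z)) := by
    intro z
    rw [hderivt z]
    have h1 := hBound1 (-z)
    rw [← hcos_t z] at h1
    exact h1
  have hφtπ : φt Real.pi < C := hCmain φt hφtdiff hφt0 hBound2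
  have hφtval : φt Real.pi = 2 * Real.pi - φ (-Real.pi) := by simp only [hφtdef]
  rw [hφtval] at hφtπ
  linarith
end

section
/- Let c ≥ 0, β ∈ ℝ, g > 0, λ > 0, and let J : ℝ → ℝ be continuous, strictly positive, and 2π-periodic. If f_{c,β}(λ) < g · min_{x∈ℝ} J(x), then every differentiable φ : ℝ → ℝ satisfying φ'(z) = λ h(φ(z)) + λ g R_λ(z) w(φ(z)) for all z ∈ ℝ and φ(0) = π satisfies φ(π) − φ(−π) > 2π. -/
open MeasureTheory Real Set

section AuxRTheta

lemma aux_exp_big {c lam : ℝ} (hc : 0 ≤ c) (hlam : 0 < lam) :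
    1 < Real.exp (2 * Real.pi * lam + c / 2) :=
  Real.one_lt_exp_iff.2 (by positivity)

lemma aux_rTheta_nonneg {c lam : ℝ} (hc : 0 ≤ c) (hlam : 0 < lam) (z : ℝ) :
    0 ≤ rTheta c lam z := by
  have h1 : 0 ≤ Heav z := by unfold Heav; split <;> norm_num
  have h2 : 0 ≤ (Real.exp (2 * Real.pi * lam + c / 2) - 1)⁻¹ := by
    have := aux_exp_big hc hlam (c := c) (lam := lam)
    exact inv_nonneg.2 (by linarith)
  unfold rTheta
  positivity

lemma aux_rTheta_left {c lam z : ℝ} (h : z < 0) :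
    rTheta c lam z
      = (1 / 2) * (Real.exp (2 * Real.pi * lam + c / 2) - 1)⁻¹ * Real.exp (-(lam * z)) := by
  unfold rTheta Heav
  rw [if_pos h]; ring

lemma aux_rTheta_right {c lam z : ℝ} (h : 0 ≤ z) :
    rTheta c lam z
      = (1 / 2) * Real.exp (-(c/2)) * (1 + (Real.exp (2 * Real.pi * lam + c / 2) - 1)⁻¹)
          * Real.exp (-(lam * z)) := by
  unfold rTheta Heav
  rw [if_neg (not_lt.2 h)]
  rw [show -(lam * z + c / 2 * 1) = -(c/2) + -(lam*z) by ring, Real.exp_add]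
  ring

/-- FTC helper. -/
lemma aux_integral_exp (K lam a b : ℝ) (hlam : lam ≠ 0) :
    ∫ y in a..b, K * Real.exp (-(lam * y))
      = (K / lam) * (Real.exp (-(lam * a)) - Real.exp (-(lam * b))) := by
  have h : ∀ y ∈ Set.uIcc a b, HasDerivAt (fun y => -(K / lam) * Real.exp (-(lam * y)))
      (K * Real.exp (-(lam * y))) y := by
    intro y _
    have h1 : HasDerivAt (fun y : ℝ => -(lam * y)) (-lam) y := by
      simpa using ((hasDerivAt_id y).const_mul (-lam))
    have := (h1.exp).const_mul (-(K / lam))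
    refine this.congr_deriv ?_
    field_simp
  rw [intervalIntegral.integral_eq_sub_of_hasDerivAt h
    (by apply Continuous.intervalIntegrable; continuity)]
  ring

lemma aux_ae_ne_zero : ∀ᵐ x : ℝ, x ≠ (0:ℝ) := by
  rw [MeasureTheory.ae_iff]; simp

lemma aux_uIoc_left : Set.uIoc (-Real.pi) (0:ℝ) = Set.Ioc (-Real.pi) 0 :=
  Set.uIoc_of_le (by linarith [Real.pi_pos])

lemma aux_left_ae (c lam : ℝ) (u : ℝ → ℝ) :
    (fun y => u y * rTheta c lam y)
      =ᵐ[volume.restrict (Set.Ioc (-Real.pi) 0)]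
    (fun y => u y * ((1 / 2) * (Real.exp (2 * Real.pi * lam + c / 2) - 1)⁻¹
        * Real.exp (-(lam * y)))) := by
  refine (ae_restrict_iff' measurableSet_Ioc).2 ?_
  filter_upwards [aux_ae_ne_zero] with x hx hmem
  rw [aux_rTheta_left (lt_of_le_of_ne hmem.2 hx)]

lemma aux_ii_left {c lam : ℝ} (u : ℝ → ℝ) (hu : Continuous u) :
    IntervalIntegrable (fun y => u y * rTheta c lam y) volume (-Real.pi) 0 := by
  rw [intervalIntegrable_iff, aux_uIoc_left]
  have hcont : Continuous (fun y => u y * ((1 / 2) * (Real.exp (2 * Real.pi * lam + c / 2) - 1)⁻¹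
      * Real.exp (-(lam * y)))) := by continuity
  exact (hcont.integrableOn_Ioc).congr (aux_left_ae c lam u).symm

lemma aux_int_left {c lam : ℝ} (u : ℝ → ℝ) :
    ∫ y in (-Real.pi)..0, u y * rTheta c lam y
      = ∫ y in (-Real.pi)..0, u y * ((1 / 2) * (Real.exp (2 * Real.pi * lam + c / 2) - 1)⁻¹
          * Real.exp (-(lam * y))) := by
  apply intervalIntegral.integral_congr_ae
  rw [aux_uIoc_left]
  filter_upwards [aux_ae_ne_zero] with x hx hmem
  rw [aux_rTheta_left (lt_of_le_of_ne hmem.2 hx)]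

lemma aux_rdef_eqon {c lam : ℝ} (u : ℝ → ℝ) :
    Set.EqOn (fun y => u y * rTheta c lam y)
      (fun y => u y * ((1 / 2) * Real.exp (-(c/2))
          * (1 + (Real.exp (2 * Real.pi * lam + c / 2) - 1)⁻¹) * Real.exp (-(lam * y))))
      (Set.Icc 0 Real.pi) := by
  intro x hx
  simp only [aux_rTheta_right hx.1]

lemma aux_ii_right {c lam : ℝ} (u : ℝ → ℝ) (hu : Continuous u) :
    IntervalIntegrable (fun y => u y * rTheta c lam y) volume 0 Real.pi := by
  rw [intervalIntegrable_iff, Set.uIoc_of_le Real.pi_pos.le]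
  have hcont : Continuous (fun y => u y * ((1 / 2) * Real.exp (-(c/2))
      * (1 + (Real.exp (2 * Real.pi * lam + c / 2) - 1)⁻¹) * Real.exp (-(lam * y)))) := by
    continuity
  exact (hcont.integrableOn_Ioc).congr_fun
    (fun x hx => (aux_rdef_eqon u (Set.Ioc_subset_Icc_self hx)).symm) measurableSet_Ioc

lemma aux_int_right {c lam : ℝ} (u : ℝ → ℝ) :
    ∫ y in (0:ℝ)..Real.pi, u y * rTheta c lam y
      = ∫ y in (0:ℝ)..Real.pi, u y * ((1 / 2) * Real.exp (-(c/2))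
          * (1 + (Real.exp (2 * Real.pi * lam + c / 2) - 1)⁻¹) * Real.exp (-(lam * y))) := by
  apply intervalIntegral.integral_congr
  rw [Set.uIcc_of_le Real.pi_pos.le]
  exact aux_rdef_eqon u

lemma aux_ii_full {c lam : ℝ} (u : ℝ → ℝ) (hu : Continuous u) :
    IntervalIntegrable (fun y => u y * rTheta c lam y) volume (-Real.pi) Real.pi :=
  (aux_ii_left u hu).trans (aux_ii_right u hu)

lemma aux_integral_rTheta {c lam : ℝ} (hc : 0 ≤ c) (hlam : 0 < lam) :
    ∫ y in (-Real.pi)..Real.pi, rTheta c lam y = rhoC c lam / (2 * lam) := by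
  have h1 := aux_ii_left (c := c) (lam := lam) (fun _ => (1:ℝ)) continuous_const
  have h2 := aux_ii_right (c := c) (lam := lam) (fun _ => (1:ℝ)) continuous_const
  simp only [one_mul] at h1 h2
  rw [← intervalIntegral.integral_add_adjacent_intervals h1 h2]
  have hL := aux_int_left (c := c) (lam := lam) (fun _ => (1:ℝ))
  have hR := aux_int_right (c := c) (lam := lam) (fun _ => (1:ℝ))
  simp only [one_mul] at hL hR
  rw [hL, hR, aux_integral_exp _ _ _ _ (ne_of_gt hlam), aux_integral_exp _ _ _ _ (ne_of_gt hlam)]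
  -- algebra
  have hE := aux_exp_big hc hlam (c := c) (lam := lam)
  have ha : Real.exp (-(lam * Real.pi)) = (Real.exp (lam * Real.pi))⁻¹ := Real.exp_neg _
  have h2exp : Real.exp (2 * Real.pi * lam)
      = Real.exp (lam * Real.pi) * Real.exp (lam * Real.pi) := by
    rw [← Real.exp_add]; ring_nf
  have hE2 : Real.exp (2 * Real.pi * lam + c / 2)
      = Real.exp (lam * Real.pi) * Real.exp (lam * Real.pi) * Real.exp (c/2) := by
    rw [Real.exp_add, h2exp]
  have hk : Real.exp (-(c/2)) = (Real.exp (c/2))⁻¹ := Real.exp_neg _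
  have hapos : (0:ℝ) < Real.exp (lam * Real.pi) := Real.exp_pos _
  have hkpos : (0:ℝ) < Real.exp (c/2) := Real.exp_pos _
  have hEne : Real.exp (2 * Real.pi * lam + c / 2) - 1 ≠ 0 := by linarith
  rw [rhoC]
  rw [hE2] at hEne
  rw [show -(lam * (-Real.pi)) = lam * Real.pi by ring,
    show -(lam * (0:ℝ)) = (0:ℝ) by ring, Real.exp_zero, ha, hk, hE2, h2exp]
  set a := Real.exp (lam * Real.pi)
  set k := Real.exp (c/2)
  have hEne' : a ^ 2 * k - 1 ≠ 0 := by rw [sq]; exact hEne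
  field_simp
  ring

end AuxRTheta

section AuxA

/-- The Prüfer-type reparametrization `A(θ)`, a strictly increasing smooth function with
`A(θ + 2π) = A(θ) + 2π` and `A'(θ) = 2s / (1 + s² - (1 - s²) cos θ)`. -/
noncomputable def auxA (s θ : ℝ) : ℝ :=
  θ + 2 * Real.arctan (((1 - s) * Real.sin θ) / (1 + s + (s - 1) * Real.cos θ))

lemma auxA_denom_pos {s : ℝ} (hs : 0 < s) (θ : ℝ) :
    0 < 1 + s ^ 2 - (1 - s ^ 2) * Real.cos θ := by
  rcases le_total (s ^ 2) 1 with h | h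
  · nlinarith [mul_nonneg (by linarith : (0:ℝ) ≤ 1 - s ^ 2)
      (by linarith [Real.cos_le_one θ] : (0:ℝ) ≤ 1 - Real.cos θ), mul_pos hs hs]
  · nlinarith [mul_nonneg (by linarith : (0:ℝ) ≤ s ^ 2 - 1)
      (by linarith [Real.neg_one_le_cos θ] : (0:ℝ) ≤ Real.cos θ + 1)]

lemma auxA_hasDerivAt {s : ℝ} (hs : 0 < s) (θ : ℝ) :
    HasDerivAt (auxA s) (2 * s / (1 + s ^ 2 - (1 - s ^ 2) * Real.cos θ)) θ := by
  have hQpos : ∀ t : ℝ, 0 < 1 + s + (s - 1) * Real.cos t := by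
    intro t
    rcases le_total s 1 with h | h
    · nlinarith [mul_nonneg (by linarith : (0:ℝ) ≤ 1 - s)
        (by linarith [Real.cos_le_one t] : (0:ℝ) ≤ 1 - Real.cos t)]
    · nlinarith [mul_nonneg (by linarith : (0:ℝ) ≤ s - 1)
        (by linarith [Real.neg_one_le_cos t] : (0:ℝ) ≤ Real.cos t + 1)]
  have hDpos := auxA_denom_pos hs θ
  have hP : HasDerivAt (fun t => (1 - s) * Real.sin t) ((1 - s) * Real.cos θ) θ :=
    (Real.hasDerivAt_sin θ).const_mul _
  have hQ : HasDerivAt (fun t => 1 + s + (s - 1) * Real.cos t)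
      ((s - 1) * -Real.sin θ) θ :=
    ((Real.hasDerivAt_cos θ).const_mul _).const_add _
  have hdiv := hP.div hQ (ne_of_gt (hQpos θ))
  have harct := hdiv.arctan
  have hsum := (hasDerivAt_id θ).add (harct.const_mul 2)
  refine hsum.congr_deriv ?_
  symm; simp only [Pi.div_apply]
  have hpy := Real.sin_sq_add_cos_sq θ
  have hQne := ne_of_gt (hQpos θ)
  have hDne := ne_of_gt hDpos
  have e1 : (1:ℝ) + ((1 - s) * Real.sin θ / (1 + s + (s - 1) * Real.cos θ)) ^ 2
      = 2 * (1 + s ^ 2 - (1 - s ^ 2) * Real.cos θ) / (1 + s + (s - 1) * Real.cos θ) ^ 2 := by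
    field_simp
    linear_combination ((1 - s) ^ 2) * hpy
  have hN2 : (1 - s) * Real.cos θ * (1 + s + (s - 1) * Real.cos θ)
        - (1 - s) * Real.sin θ * ((s - 1) * -Real.sin θ)
      = 2 * s - (1 + s ^ 2 - (1 - s ^ 2) * Real.cos θ) := by
    linear_combination (-(1 - s) ^ 2) * hpy
  rw [e1, hN2]
  generalize 1 + s + (s - 1) * Real.cos θ = Q at hQne ⊢
  generalize 1 + s ^ 2 - (1 - s ^ 2) * Real.cos θ = D at hDne ⊢
  field_simp
  ring

lemma auxA_period (s θ : ℝ) : auxA s (θ + 2 * Real.pi) = auxA s θ + 2 * Real.pi := by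
  unfold auxA
  rw [Real.sin_add_two_pi, Real.cos_add_two_pi]
  ring

lemma auxA_strictMono {s : ℝ} (hs : 0 < s) : StrictMono (auxA s) := by
  apply strictMono_of_deriv_pos
  intro θ
  rw [(auxA_hasDerivAt hs θ).deriv]
  exact div_pos (by linarith) (auxA_denom_pos hs θ)

end AuxA

/-- Lemma 5.8 (lemma `glar`): if `f_{c,β}(λ)  < g · min J`, then the solution of
(3.18)-(3.19) satisfies `φ_λ(π) - φ_λ(-π) > 2π` (i.e. `Ψ(λ) > 1`). -/
theorem rotating_waves_stmt_17 (c β g lam : ℝ) (hc : 0 ≤ c) (hg : 0 < g) (hlam : 0 < lam)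
    (J : ℝ → ℝ) (hJcont : Continuous J) (hJpos : ∀ x : ℝ, 0 < J x)
    (hJper : ∀ x : ℝ, J (x + 2 * Real.pi) = J x)
    (hineq : fCB c β lam < g * sInf (Set.range J)) :
    ∀ φ : ℝ → ℝ, Differentiable ℝ φ →
      (∀ z : ℝ, deriv φ z
        = lam * hTheta β (φ z) + lam * g * RTheta J c lam z * wTheta (φ z)) →
      φ 0 = Real.pi →
      2 * Real.pi < φ Real.pi - φ (-Real.pi) := by
  intro φ hφdiff hode _
  set m : ℝ := sInf (Set.range J) with hm_def
  have hmle : ∀ x : ℝ, m ≤ J x := fun x =>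
    csInf_le ⟨0, fun y hy => by obtain ⟨x, rfl⟩ := hy; exact (hJpos x).le⟩ (Set.mem_range_self x)
  -- positivity of rho
  have hE := aux_exp_big hc hlam (c := c) (lam := lam)
  have hEnum : (1:ℝ) < Real.exp (2 * Real.pi * lam) := Real.one_lt_exp_iff.2 (by positivity)
  have hρpos : 0 < rhoC c lam := div_pos (by linarith) (by linarith)
  -- lower bound on RTheta
  have hRlb : ∀ z : ℝ, m * (rhoC c lam / (2 * lam)) ≤ RTheta J c lam z := by
    intro z
    have hu : Continuous (fun y : ℝ => J (z - y)) :=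
      hJcont.comp (continuous_const.sub continuous_id)
    have hii2 : IntervalIntegrable (fun y => J (z - y) * rTheta c lam y)
        volume (-Real.pi) Real.pi := aux_ii_full _ hu
    have hii1 : IntervalIntegrable (fun y => m * rTheta c lam y)
        volume (-Real.pi) Real.pi := aux_ii_full _ continuous_const
    have hmono := intervalIntegral.integral_mono_on
      (by linarith [Real.pi_pos] : -Real.pi ≤ Real.pi) hii1 hii2
      (fun x _ => mul_le_mul_of_nonneg_right (hmle (z - x)) (aux_rTheta_nonneg hc hlam x))
    rw [intervalIntegral.integral_const_mul, aux_integral_rTheta hc hlam] at hmono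
    exact hmono
  -- the key constant
  have hlamne : lam ≠ 0 := ne_of_gt hlam
  have hρne : rhoC c lam ≠ 0 := ne_of_gt hρpos
  have hq1 : 1 / (4 * lam ^ 2) < β + g * (m * (rhoC c lam / (2 * lam))) := by
    have h0 : (1 - 4 * β * lam ^ 2) / (2 * lam * rhoC c lam) < g * m := hineq
    have hpos : 0 < rhoC c lam / (2 * lam) := by positivity
    have h1 := mul_lt_mul_of_pos_right h0 hpos
    have e : (1 - 4 * β * lam ^ 2) / (2 * lam * rhoC c lam) * (rhoC c lam / (2 * lam))
        = 1 / (4 * lam ^ 2) - β := by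
      field_simp; ring
    rw [e] at h1
    nlinarith
  have hq1pos : 0 < β + g * (m * (rhoC c lam / (2 * lam))) := by
    have : (0:ℝ) < 1 / (4 * lam ^ 2) := by positivity
    linarith
  set s : ℝ := Real.sqrt (β + g * (m * (rhoC c lam / (2 * lam)))) with hs_def
  have hspos : 0 < s := Real.sqrt_pos.2 hq1pos
  have hs2 : s ^ 2 = β + g * (m * (rhoC c lam / (2 * lam))) := Real.sq_sqrt hq1pos.le
  have hsgt : 1 / (2 * lam) < s := by
    rw [hs_def]
    refine (Real.lt_sqrt (by positivity)).2 ?_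
    have : (1 / (2 * lam)) ^ 2 = 1 / (4 * lam ^ 2) := by
      field_simp; ring
    rw [this]; exact hq1
  -- pointwise lower bound for the right-hand side
  have hq : ∀ z : ℝ, s ^ 2 ≤ β + g * RTheta J c lam z := by
    intro z
    rw [hs2]
    have := mul_le_mul_of_nonneg_left (hRlb z) hg.le
    linarith
  -- the derivative of z ↦ auxA s (φ z)
  have hAφ : ∀ z : ℝ, HasDerivAt (fun z => auxA s (φ z))
      (2 * s / (1 + s ^ 2 - (1 - s ^ 2) * Real.cos (φ z)) * deriv φ z) z := fun z =>
    (auxA_hasDerivAt hspos (φ z)).comp z (hφdiff z).hasDerivAt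
  -- the shifted function is monotone
  set Φ : ℝ → ℝ := fun z => auxA s (φ z) - 2 * lam * s * z with hΦ_def
  have hΦ' : ∀ z : ℝ, HasDerivAt Φ
      (2 * s / (1 + s ^ 2 - (1 - s ^ 2) * Real.cos (φ z)) * deriv φ z - 2 * lam * s) z := by
    intro z
    exact (hAφ z).sub (by simpa using (hasDerivAt_id z).const_mul (2 * lam * s))
  have hΦderiv_nonneg : ∀ z : ℝ, 0 ≤ deriv Φ z := by
    intro z
    rw [(hΦ' z).deriv]
    have hD := auxA_denom_pos hspos (φ z)
    set C := Real.cos (φ z) with hC_def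
    have h1C : 0 ≤ 1 + C := by
      have := Real.neg_one_le_cos (φ z); rw [← hC_def] at this; linarith
    have hstep : lam * (1 + s ^ 2 - (1 - s ^ 2) * C) ≤ deriv φ z := by
      rw [hode z]
      unfold hTheta wTheta
      rw [← hC_def]
      nlinarith [mul_nonneg (mul_nonneg hlam.le h1C) (sub_nonneg.2 (hq z))]
    have hfrac : 0 < 2 * s / (1 + s ^ 2 - (1 - s ^ 2) * C) := div_pos (by linarith) hD
    have h2 := mul_le_mul_of_nonneg_left hstep hfrac.le
    have e : 2 * s / (1 + s ^ 2 - (1 - s ^ 2) * C) * (lam * (1 + s ^ 2 - (1 - s ^ 2) * C))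
        = 2 * lam * s := by
      field_simp
    rw [e] at h2
    linarith
  have hΦmono : Monotone Φ :=
    monotone_of_deriv_nonneg (fun z => (hΦ' z).differentiableAt) hΦderiv_nonneg
  have hΦineq := hΦmono (by linarith [Real.pi_pos] : -Real.pi ≤ Real.pi)
  simp only [hΦ_def] at hΦineq
  -- conclude
  have hπ : 0 < Real.pi := Real.pi_pos
  have hgap : 2 * Real.pi < auxA s (φ Real.pi) - auxA s (φ (-Real.pi)) := by
    have h4 : 4 * Real.pi * lam * s ≤ auxA s (φ Real.pi) - auxA s (φ (-Real.pi)) := by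
      nlinarith [hΦineq]
    have : 2 * Real.pi < 4 * Real.pi * lam * s := by
      have h5 : 1 < 2 * lam * s := by
        have := mul_lt_mul_of_pos_left hsgt (by positivity : (0:ℝ) < 2 * lam)
        rw [mul_one_div, div_self (by positivity : (2:ℝ) * lam ≠ 0)] at this
        linarith
      nlinarith
    linarith
  have hkey : auxA s (φ (-Real.pi) + 2 * Real.pi) < auxA s (φ Real.pi) := by
    rw [auxA_period]
    linarith
  have := (auxA_strictMono hspos).lt_iff_lt.1 hkey
  linarith
end
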